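/- For every γ > 0 and all real numbers w and δ, the quadratic form w²·(δ² + γ) − 2·δ·w + δ²/γ is nonnegative; moreover it is strictly positive whenever δ ≠ 0. Consequently, in the observational two-node system, the expected inverse-variance-weighted (dotears) loss of the misdirected model X₂ → X₁ with weight δ is at least that of the true model X₁ → X₂ with weight w, for all w, δ, and γ. -/
import Mathlib

/-- For every `γ > 0` and all real `w, δ`, the quadratic form
`w²·(δ² + γ) − 2δw + δ²/γ` is nonnegative, and strictly positive whenever `δ ≠ 0`.
(This quantity is, up to the positive factor `α²`, the excess expected dotears loss of
the misdirected two-node model over the true model.) -/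
theorem dotears_observational_two_node_loss_gap_nonneg
    (γ : ℝ) (hγ : 0 < γ) :
    ∀ w δ : ℝ,
      0 ≤ w ^ 2 * (δ ^ 2 + γ) - 2 * δ * w + δ ^ 2 / γ ∧
      (δ ≠ 0 → 0 < w ^ 2 * (δ ^ 2 + γ) - 2 * δ * w + δ ^ 2 / γ) := by
  intro w δ
  have key : w ^ 2 * (δ ^ 2 + γ) - 2 * δ * w + δ ^ 2 / γ
      = w ^ 2 * δ ^ 2 + γ * (w - δ / γ) ^ 2 := by
    field_simp; ring
  constructor
  · rw [key]; positivity
  · intro hδ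
    rw [key]
    rcases eq_or_ne w 0 with hw | hw
    · subst hw
      have h1 : (0:ℝ) < (0 - δ / γ) ^ 2 := by
        have : δ / γ ≠ 0 := div_ne_zero hδ hγ.ne'
        have : 0 - δ / γ ≠ 0 := by simpa using (neg_ne_zero.mpr this)
        positivity
      nlinarith
    · have : 0 < w ^ 2 * δ ^ 2 := by positivity
      nlinarith [sq_nonneg (w - δ / γ)]
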